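/- Let a, b be real numbers with b > 0 and a·b ≥ 1/4. Then for all natural numbers k and l with k ≥ l, D(k+1) ≤ b · D(k)² · (1 + a/(b · D(l)²)). -/

import Mathlib

theorem stmt_2 (a b : ℝ) (hb : 0 < b) (hab : a * b ≥ 1/4)
    (D : ℕ → ℝ) (hD0 : D 0 = 1) (hD : ∀ n, D (n + 1) = a + b * D n ^ 2) :
    ∀ k l : ℕ, k ≥ l → D (k + 1) ≤ b * D k ^ 2 * (1 + a / (b * D l ^ 2)) := by
  have h1 : ∀ n, 1 ≤ D n := by
    intro n
    induction n with
    | zero => rw [hD0]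
    | succ n ih =>
      rw [hD n]
      nlinarith [sq_nonneg (2 * b * D n - 1), sq_nonneg (D n - 1)]
  have hstep : ∀ n, D n ≤ D (n + 1) := by
    intro n
    rw [hD n]
    nlinarith [sq_nonneg (2 * b * D n - 1)]
  have hmono : Monotone D := monotone_nat_of_le_succ hstep
  have ha : 0 < a := by nlinarith
  intro k l hkl
  have hDl := h1 l
  have hDk : D l ≤ D k := hmono hkl
  have hpos : 0 < b * D l ^ 2 := by positivity
  have key : b * D k ^ 2 * (1 + a / (b * D l ^ 2)) =
      b * D k ^ 2 + a * (D k ^ 2 / D l ^ 2) := by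
    field_simp
  rw [hD k, key]
  have hone : 1 ≤ D k ^ 2 / D l ^ 2 := by
    rw [one_le_div (by positivity)]
    nlinarith
  nlinarith [mul_le_mul_of_nonneg_left hone ha.le]
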